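/- The map σ : U → U defined by σ(a) := a + qa − aq satisfies σ(1) = 1, σ(q) = q, and is an algebra homomorphism on the enveloping^{⟨4-th⟩} algebra U, i.e., σ(ab) = σ(a)σ(b) for all a, b ∈ U. -/

import Mathlib

noncomputable section

/-- The free `K`-vector space on `X ⊕ {q̃}`. -/
abbrev FreeInvModule (K : Type*) [Field K] (X : Type*) : Type _ := (X ⊕ Unit) →₀ K

/-- The generator `q̃` inside the tensor algebra `T(V)`. -/
def qTilde (K : Type*) [Field K] (X : Type*) : TensorAlgebra K (FreeInvModule K X) :=
  TensorAlgebra.ι K (Finsupp.single (Sum.inr ()) 1)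

/-- The relations generating the ideal `I`: `q̃⊗q̃ = q̃` and `q̃⊗a⊗q̃ = q̃⊗a` for all `a`. -/
inductive InvRel (K : Type*) [Field K] (X : Type*) :
    TensorAlgebra K (FreeInvModule K X) → TensorAlgebra K (FreeInvModule K X) → Prop
  | idem : InvRel K X (qTilde K X * qTilde K X) (qTilde K X)
  | inv (a : TensorAlgebra K (FreeInvModule K X)) :
      InvRel K X (qTilde K X * a * qTilde K X) (qTilde K X * a)

/-- The free invariant algebra `Â = T(V)/I`. -/
abbrev FreeInvAlg (K : Type*) [Field K] (X : Type*) : Type _ := RingQuot (InvRel K X)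

/-- `q̂ = q̃ + I`. -/
def qHat (K : Type*) [Field K] (X : Type*) : FreeInvAlg K X :=
  RingQuot.mkAlgHom K (InvRel K X) (qTilde K X)

variable (K : Type*) [Field K]

/-- The linear embedding `L → Â` extending `î` on the basis `X = {x_j}`. -/
def lHat (J : Type*) (L : Type*) [AddCommGroup L] [Module K L] (b : Module.Basis J K L) :
    L →ₗ[K] FreeInvAlg K J :=
  (RingQuot.mkAlgHom K (InvRel K J)).toLinearMap ∘ₗ
    (TensorAlgebra.ι K (M := FreeInvModule K J)) ∘ₗ
      (Finsupp.lmapDomain K K Sum.inl) ∘ₗ b.repr.toLinearMap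


/-- The relations generating the ideal `R` for a right Leibniz algebra `(L, ⟨·,·⟩)`:
`⟨x,y⟩^ = x̂ŷ - ŷx̂ + ŷq̂x̂ - x̂ŷq̂ + k x̂q̂ŷ - k q̂ŷx̂` for all `x, y ∈ L`. -/
inductive LeibRel (J : Type*) (L : Type*) [AddCommGroup L] [Module K L]
    (br : L →ₗ[K] L →ₗ[K] L) (b : Module.Basis J K L) (c : K) :
    FreeInvAlg K J → FreeInvAlg K J → Prop
  | rel (x y : L) : LeibRel J L br b c (lHat K J L b (br x y))
      (lHat K J L b x * lHat K J L b y - lHat K J L b y * lHat K J L b x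
        + lHat K J L b y * qHat K J * lHat K J L b x
        - lHat K J L b x * lHat K J L b y * qHat K J
        + c • (lHat K J L b x * qHat K J * lHat K J L b y)
        - c • (qHat K J * lHat K J L b y * lHat K J L b x))

/-- The enveloping^⟨4-th⟩ algebra `U = Â/R` of a Leibniz algebra. -/
abbrev EnvLeib (J : Type*) (L : Type*) [AddCommGroup L] [Module K L]
    (br : L →ₗ[K] L →ₗ[K] L) (b : Module.Basis J K L) (c : K) : Type _ :=
  RingQuot (LeibRel K J L br b c)

/-- `q̄ = q̂ + R`. -/
def qBarLeib (J : Type*) (L : Type*) [AddCommGroup L] [Module K L]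
    (br : L →ₗ[K] L →ₗ[K] L) (b : Module.Basis J K L) (c : K) : EnvLeib K J L br b c :=
  RingQuot.mkAlgHom K (LeibRel K J L br b c) (qHat K J)

/-- The canonical linear map `i : L → U`, `i(x) = x̂ + R`. -/
def iLeib (J : Type*) (L : Type*) [AddCommGroup L] [Module K L]
    (br : L →ₗ[K] L →ₗ[K] L) (b : Module.Basis J K L) (c : K) : L →ₗ[K] EnvLeib K J L br b c :=
  (RingQuot.mkAlgHom K (LeibRel K J L br b c)).toLinearMap ∘ₗ lHat K J L b

/-- On the enveloping^⟨4-th⟩ algebra `U` of a right Leibniz algebra `L`, the map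
`σ(a) := a + q a - a q` satisfies `σ(1) = 1`, `σ(q) = q`, and is an algebra homomorphism:
`σ(ab) = σ(a)σ(b)` for all `a, b ∈ U`. -/
lemma qHat_idem (J : Type*) : qHat K J * qHat K J = qHat K J := by
  unfold qHat
  rw [← map_mul]
  exact RingQuot.mkAlgHom_rel K InvRel.idem

lemma qHat_inv (J : Type*) (x : FreeInvAlg K J) :
    qHat K J * x * qHat K J = qHat K J * x := by
  obtain ⟨t, rfl⟩ := RingQuot.mkAlgHom_surjective K (InvRel K J) x
  unfold qHat
  rw [← map_mul, ← map_mul]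
  exact RingQuot.mkAlgHom_rel K (InvRel.inv t)

lemma qBar_idem (J : Type*) (L : Type*) [AddCommGroup L] [Module K L]
    (br : L →ₗ[K] L →ₗ[K] L) (b : Module.Basis J K L) (c : K) :
    qBarLeib K J L br b c * qBarLeib K J L br b c = qBarLeib K J L br b c := by
  unfold qBarLeib
  rw [← map_mul, qHat_idem]

lemma qBar_inv (J : Type*) (L : Type*) [AddCommGroup L] [Module K L]
    (br : L →ₗ[K] L →ₗ[K] L) (b : Module.Basis J K L) (c : K) (a : EnvLeib K J L br b c) :
    qBarLeib K J L br b c * a * qBarLeib K J L br b c = qBarLeib K J L br b c * a := by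
  obtain ⟨t, rfl⟩ := RingQuot.mkAlgHom_surjective K (LeibRel K J L br b c) a
  unfold qBarLeib
  rw [← map_mul, ← map_mul, qHat_inv]

lemma sigma_mul_aux {R : Type*} [Ring R] (q : R) (k1 : q * q = q)
    (k2 : ∀ x : R, q * x * q = q * x) (a b : R) :
    a * b + q * (a * b) - (a * b) * q =
      (a + q * a - a * q) * (b + q * b - b * q) := by
  have m1 : q * (a * (q * b)) = q * (a * b) := by
    rw [← mul_assoc, ← mul_assoc, k2, mul_assoc]
  have m2 : a * (q * (q * b)) = a * (q * b) := by
    rw [← mul_assoc q q, k1]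
  have m3 : a * (q * (b * q)) = a * (q * b) := by
    rw [← mul_assoc q b, k2]
  have m4 : q * (a * (b * q)) = q * (a * b) := by
    rw [← mul_assoc a b, ← mul_assoc, k2]
  simp only [add_mul, sub_mul, mul_add, mul_sub, mul_assoc]
  rw [m1, m2, m3, m4]
  abel

theorem envLeib_sigma_algHom (J : Type*) (L : Type*) [AddCommGroup L] [Module K L]
    (br : L →ₗ[K] L →ₗ[K] L)
    (hleib : ∀ x y z : L, br (br x y) z = br x (br y z) + br (br x z) y)
    (b : Module.Basis J K L) (c : K) (hc : c ≠ 0) :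
    let q : EnvLeib K J L br b c := qBarLeib K J L br b c
    let σ : EnvLeib K J L br b c → EnvLeib K J L br b c := fun a => a + q * a - a * q
    (σ 1 = 1) ∧ (σ q = q) ∧ (∀ a b' : EnvLeib K J L br b c, σ (a * b') = σ a * σ b') := by
  intro q σ
  have k1 : q * q = q := qBar_idem K J L br b c
  have k2 : ∀ x : EnvLeib K J L br b c, q * x * q = q * x := qBar_inv K J L br b c
  refine ⟨by simp only [σ, mul_one, one_mul]; abel, by simp only [σ, k1]; abel, ?_⟩
  intro a b'
  show a * b' + q * (a * b') - (a * b') * q =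
      (a + q * a - a * q) * (b' + q * b' - b' * q)
  exact sigma_mul_aux q k1 k2 a b'
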